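/- Let W be a ℤ^d-valued random vector and ξ another random vector defined on the same space, J a value with P[ξ=J] > 0. For any coordinate vector e^{(j)}, d_TV(L(W | ξ=J), L(W+e^{(j)} | ξ=J)) ≤ d_TV(L(W), L(W+e^{(j)})) + 2 u^J, where u^J := (P[ξ=J])⁻¹ E|P[ξ=J|W] - P[ξ=J]|. -/

import Mathlib

open MeasureTheory

/-- Total variation distance between two measures. -/
noncomputable def tvDist {α : Type*} [MeasurableSpace α] (μ ν : Measure α) : ℝ :=
  ⨆ s : Set α, |(μ s).toReal - (ν s).toReal|

theorem stmt6 {Ω : Type*} [MeasurableSpace Ω] (ℙ : Measure Ω) [IsProbabilityMeasure ℙ]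
    {d : ℕ} (W ξ : Ω → Fin d → ℤ) (hW : Measurable W) (hξ : Measurable ξ)
    (J : Fin d → ℤ) (hJ : 0 < ℙ {ω | ξ ω = J})
    (Q : Ω → ℝ)
    (hQ : Q = ℙ[Set.indicator {ω | ξ ω = J} (fun _ => (1 : ℝ)) |
      MeasurableSpace.comap W inferInstance])
    (u : ℝ)
    (hu : u = (ℙ {ω | ξ ω = J}).toReal⁻¹ * ∫ ω, |Q ω - (ℙ {ω' | ξ ω' = J}).toReal| ∂ℙ)
    (j : Fin d) :
    tvDist (Measure.map W (ProbabilityTheory.cond ℙ {ω | ξ ω = J}))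
        (Measure.map (fun ω => W ω + Pi.single j 1) (ProbabilityTheory.cond ℙ {ω | ξ ω = J}))
      ≤ tvDist (Measure.map W ℙ) (Measure.map (fun ω => W ω + Pi.single j 1) ℙ) + 2 * u := by
  classical
  set A : Set Ω := {ω | ξ ω = J} with hAdef
  have hall : ∀ t : Set (Fin d → ℤ), MeasurableSet t := fun t => t.to_countable.measurableSet
  have hAm : MeasurableSet A := hξ (hall {J})
  have hAne : ℙ A ≠ 0 := hJ.ne'
  have hAfin : ℙ A ≠ ⊤ := measure_ne_top _ _
  set q : ℝ := (ℙ A).toReal with hqdef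
  have hq0 : 0 < q := ENNReal.toReal_pos hAne hAfin
  have hle : MeasurableSpace.comap W inferInstance ≤ (inferInstance : MeasurableSpace Ω) :=
    hW.comap_le
  have hind : Integrable (Set.indicator A (fun _ => (1 : ℝ))) ℙ :=
    (integrable_const (1 : ℝ)).indicator hAm
  have hQint : Integrable Q ℙ := hQ ▸ integrable_condExp
  have hW' : Measurable (fun ω => W ω + Pi.single j 1) := hW.add_const _
  -- key estimate
  have key : ∀ B : Set Ω, MeasurableSet[MeasurableSpace.comap W inferInstance] B →
      |q⁻¹ * (ℙ (A ∩ B)).toReal - (ℙ B).toReal| ≤ u := by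
    intro B hBm
    have hB : MeasurableSet B := hle _ hBm
    have h1 : ∫ x in B, Q x ∂ℙ = (ℙ (A ∩ B)).toReal := by
      rw [hQ, setIntegral_condExp hle hind hBm]
      rw [integral_indicator_const (1 : ℝ) hAm, measureReal_def, Measure.restrict_apply hAm]
      simp
    have h3 : ∫ x in B, (Q x - q) ∂ℙ = (ℙ (A ∩ B)).toReal - q * (ℙ B).toReal := by
      rw [integral_sub hQint.integrableOn (integrable_const q).integrableOn, h1,
        setIntegral_const]
      simp [smul_eq_mul, mul_comm, measureReal_def]
    have habs : |∫ x in B, (Q x - q) ∂ℙ| ≤ ∫ x, |Q x - q| ∂ℙ := by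
      calc |∫ x in B, (Q x - q) ∂ℙ| ≤ ∫ x in B, |Q x - q| ∂ℙ := by
            simpa [Real.norm_eq_abs] using
              norm_integral_le_integral_norm (μ := ℙ.restrict B) (fun x => Q x - q)
        _ ≤ ∫ x, |Q x - q| ∂ℙ := by
            apply setIntegral_le_integral ((hQint.sub (integrable_const q)).abs)
            filter_upwards with x using abs_nonneg _
    have heq : q⁻¹ * (ℙ (A ∩ B)).toReal - (ℙ B).toReal
        = q⁻¹ * ((ℙ (A ∩ B)).toReal - q * (ℙ B).toReal) := by
      field_simp
    rw [heq, ← h3, hu, abs_mul, abs_of_nonneg (inv_nonneg.mpr hq0.le)]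
    exact mul_le_mul_of_nonneg_left habs (inv_nonneg.mpr hq0.le)
  -- conditional measure evaluation
  have hcond : ∀ (V : Ω → Fin d → ℤ), Measurable V → ∀ s : Set (Fin d → ℤ),
      ((Measure.map V (ProbabilityTheory.cond ℙ A)) s).toReal
        = q⁻¹ * (ℙ (A ∩ V ⁻¹' s)).toReal := by
    intro V hV s
    rw [Measure.map_apply hV (hall s), ProbabilityTheory.cond_apply hAm]
    rw [ENNReal.toReal_mul, ENNReal.toReal_inv]
  have hmap : ∀ (V : Ω → Fin d → ℤ), Measurable V → ∀ s : Set (Fin d → ℤ),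
      ((Measure.map V ℙ) s).toReal = (ℙ (V ⁻¹' s)).toReal := by
    intro V hV s
    rw [Measure.map_apply hV (hall s)]
  -- bddAbove for the TV sup
  haveI : IsProbabilityMeasure (Measure.map W ℙ) := Measure.isProbabilityMeasure_map hW.aemeasurable
  haveI : IsProbabilityMeasure (Measure.map (fun ω => W ω + Pi.single j 1) ℙ) :=
    Measure.isProbabilityMeasure_map hW'.aemeasurable
  have hbdd : BddAbove (Set.range fun s : Set (Fin d → ℤ) =>
      |((Measure.map W ℙ) s).toReal
        - ((Measure.map (fun ω => W ω + Pi.single j 1) ℙ) s).toReal|) := by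
    refine ⟨2, ?_⟩
    rintro _ ⟨s, rfl⟩
    have h1 : ((Measure.map W ℙ) s).toReal ≤ 1 := by
      have := prob_le_one (μ := Measure.map W ℙ) (s := s)
      simpa using ENNReal.toReal_mono (by simp) this
    have h2 : ((Measure.map (fun ω => W ω + Pi.single j 1) ℙ) s).toReal ≤ 1 := by
      have := prob_le_one (μ := Measure.map (fun ω => W ω + Pi.single j 1) ℙ) (s := s)
      simpa using ENNReal.toReal_mono (by simp) this
    have := abs_sub_abs_le_abs_sub ((Measure.map W ℙ) s).toReal
      ((Measure.map (fun ω => W ω + Pi.single j 1) ℙ) s).toReal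
    have h1' : (0:ℝ) ≤ ((Measure.map W ℙ) s).toReal := ENNReal.toReal_nonneg
    have h2' : (0:ℝ) ≤ ((Measure.map (fun ω => W ω + Pi.single j 1) ℙ) s).toReal :=
      ENNReal.toReal_nonneg
    calc |((Measure.map W ℙ) s).toReal
          - ((Measure.map (fun ω => W ω + Pi.single j 1) ℙ) s).toReal|
        ≤ |((Measure.map W ℙ) s).toReal|
          + |((Measure.map (fun ω => W ω + Pi.single j 1) ℙ) s).toReal| := abs_sub _ _
      _ ≤ 2 := by rw [abs_of_nonneg h1', abs_of_nonneg h2']; linarith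
  -- main bound
  apply ciSup_le
  intro s
  have hmid : |(ℙ (W ⁻¹' s)).toReal - (ℙ ((fun ω => W ω + Pi.single j 1) ⁻¹' s)).toReal|
      ≤ tvDist (Measure.map W ℙ) (Measure.map (fun ω => W ω + Pi.single j 1) ℙ) := by
    rw [← hmap W hW s, ← hmap _ hW' s]
    exact le_ciSup hbdd s
  have hBm : MeasurableSet[MeasurableSpace.comap W inferInstance] (W ⁻¹' s) :=
    ⟨s, hall s, rfl⟩
  have hB'm : MeasurableSet[MeasurableSpace.comap W inferInstance]
      ((fun ω => W ω + Pi.single j 1) ⁻¹' s) := by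
    refine ⟨(· + Pi.single j 1) ⁻¹' s, hall _, ?_⟩
    rfl
  have k1 := key _ hBm
  have k2 := key _ hB'm
  rw [hcond W hW s, hcond _ hW' s]
  set x := q⁻¹ * (ℙ (A ∩ W ⁻¹' s)).toReal
  set y := q⁻¹ * (ℙ (A ∩ (fun ω => W ω + Pi.single j 1) ⁻¹' s)).toReal
  set p := (ℙ (W ⁻¹' s)).toReal
  set p' := (ℙ ((fun ω => W ω + Pi.single j 1) ⁻¹' s)).toReal
  have k2' : |p' - y| ≤ u := by rw [abs_sub_comm]; exact k2
  calc |x - y| ≤ |x - p| + |p - y| := abs_sub_le _ _ _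
    _ ≤ |x - p| + (|p - p'| + |p' - y|) := by linarith [abs_sub_le p p' y]
    _ ≤ tvDist (Measure.map W ℙ) (Measure.map (fun ω => W ω + Pi.single j 1) ℙ) + 2 * u := by
        linarith [hmid, k1, k2']
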